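/- Let C(i,j) be the Catalan triangle numbers. Then the double series Σ_{n=1}^∞ Σ_{i=0}^{n-1} Σ_{j=1}^{n-i} C(n-i,j)/4^{n-i} · a_{i,j}, for any summable nonnegative double array (a_{i,j}), can be reindexed as Σ_{i=0}^∞ Σ_{j=1}^∞ (Σ_{l=j}^∞ C(l,j)/4^l) a_{i,j} = Σ_{i=0}^∞ Σ_{j=1}^∞ a_{i,j}/2^j. -/

import Mathlib

open Finset Filter Topology

/-- Partial sums of the column series. -/
noncomputable def Tpart (C : ℕ → ℕ → ℝ) (N j : ℕ) : ℝ :=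
  ∑ l ∈ Finset.range (N + 1), C l j / 4 ^ l

lemma Cdiag (C : ℕ → ℕ → ℝ) (h11 : C 1 1 = 1)
    (hgt : ∀ i j, i < j → C i j = 0)
    (hrec : ∀ i j, 1 ≤ j → j ≤ i → (i, j) ≠ (1, 1) →
      C i j = C (i - 1) (j - 1) + C i (j + 1)) :
    ∀ n, C (n + 1) (n + 1) = 1 := by
  intro n
  induction n with
  | zero => exact h11
  | succ n ih =>
    rw [hrec (n + 2) (n + 2) (by omega) le_rfl (by simp)]
    have e : n + 2 - 1 = n + 1 := by omega
    rw [e, ih, hgt (n + 2) (n + 3) (by omega)]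
    ring

lemma Cclosed (C : ℕ → ℕ → ℝ) (h11 : C 1 1 = 1) (h0 : ∀ i, C i 0 = 0)
    (hgt : ∀ i j, i < j → C i j = 0)
    (hrec : ∀ i j, 1 ≤ j → j ≤ i → (i, j) ≠ (1, 1) →
      C i j = C (i - 1) (j - 1) + C i (j + 1)) :
    ∀ k j, C (j + k + 1) (j + 1) =
      (Nat.choose (j + 2 * k) (j + k) : ℝ) - Nat.choose (j + 2 * k) (j + k + 1) := by
  intro k
  induction k with
  | zero =>
    intro j
    simp only [Nat.add_zero, Nat.mul_zero]
    rw [Cdiag C h11 hgt hrec j, Nat.choose_self, Nat.choose_succ_self]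
    norm_num
  | succ k ihk =>
    intro j
    induction j with
    | zero =>
      rw [show (0 : ℕ) + (k + 1) + 1 = k + 2 by omega]
      rw [hrec (k + 2) 1 le_rfl (by omega) (by simp)]
      have e : k + 2 - 1 = k + 1 := by omega
      rw [e, h0]
      have h2 := ihk 1
      rw [show (1 : ℕ) + k + 1 = k + 2 by omega] at h2
      rw [h2]
      have p1 : Nat.choose (2 * (k + 1)) (k + 1) =
          Nat.choose (2 * k + 1) k + Nat.choose (2 * k + 1) (k + 1) := by
        rw [show 2 * (k + 1) = (2 * k + 1) + 1 by omega]
        rw [show k + 1 = k + 1 by rfl]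
        exact Nat.choose_succ_succ (2 * k + 1) k
      have p2 : Nat.choose (2 * (k + 1)) (k + 2) =
          Nat.choose (2 * k + 1) (k + 1) + Nat.choose (2 * k + 1) (k + 2) := by
        rw [show 2 * (k + 1) = (2 * k + 1) + 1 by omega]
        exact Nat.choose_succ_succ (2 * k + 1) (k + 1)
      have sym : Nat.choose (2 * k + 1) k = Nat.choose (2 * k + 1) (k + 1) := by
        rw [← Nat.choose_symm (show k + 1 ≤ 2 * k + 1 by omega)]
        congr 1
        omega
      rw [show (0 : ℕ) + 2 * (k + 1) = 2 * (k + 1) by omega,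
        show (0 : ℕ) + (k + 1) = k + 1 by omega,
        show k + 1 + 1 = k + 2 by omega]
      rw [p1, p2, sym]
      push_cast
      rw [show (1 : ℕ) + 2 * k = 2 * k + 1 by omega,
        show (1 : ℕ) + k = k + 1 by omega] 
      ring
    | succ j ihj =>
      rw [show j + 1 + (k + 1) + 1 = j + k + 3 by omega]
      rw [hrec (j + k + 3) (j + 2) (by omega) (by omega) (by simp)]
      rw [show j + k + 3 - 1 = j + k + 2 by omega, show j + 2 - 1 = j + 1 by omega]
      have h1 := ihj
      rw [show j + (k + 1) + 1 = j + k + 2 by omega,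
        show j + 2 * (k + 1) = j + 2 * k + 2 by omega,
        show j + (k + 1) = j + k + 1 by omega] at h1
      have h2 := ihk (j + 2)
      rw [show j + 2 + k + 1 = j + k + 3 by omega,
        show j + 2 + 1 = j + 3 by omega,
        show j + 2 + 2 * k = j + 2 * k + 2 by omega,
        show j + 2 + k = j + k + 2 by omega] at h2
      rw [show j + 2 + 1 = j + 3 by omega, h1, h2]
      rw [show j + 1 + 2 * (k + 1) = (j + 2 * k + 2) + 1 by omega,
        show j + 1 + (k + 1) = (j + k + 1) + 1 by omega]
      rw [Nat.choose_succ_succ (j + 2 * k + 2) (j + k + 1),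
        show (j + k + 1) + 1 + 1 = (j + k + 2) + 1 by omega,
        Nat.choose_succ_succ (j + 2 * k + 2) (j + k + 2)]
      push_cast
      rw [show (j + k + 2) + 1 = j + k + 3 by omega]
      ring
lemma Cnonneg (C : ℕ → ℕ → ℝ) (h11 : C 1 1 = 1) (h0 : ∀ i, C i 0 = 0)
    (hgt : ∀ i j, i < j → C i j = 0)
    (hrec : ∀ i j, 1 ≤ j → j ≤ i → (i, j) ≠ (1, 1) →
      C i j = C (i - 1) (j - 1) + C i (j + 1)) :
    ∀ l j, 0 ≤ C l j := by
  intro l j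
  rcases Nat.eq_zero_or_pos j with rfl | hj
  · rw [h0]
  rcases lt_or_ge l j with h | h
  · rw [hgt _ _ h]
  obtain ⟨j', rfl⟩ : ∃ j', j = j' + 1 := ⟨j - 1, by omega⟩
  obtain ⟨k, rfl⟩ : ∃ k, l = j' + k + 1 := ⟨l - j' - 1, by omega⟩
  rw [Cclosed C h11 h0 hgt hrec k j']
  have key : Nat.choose (j' + 2 * k) (j' + k + 1) ≤ Nat.choose (j' + 2 * k) (j' + k) := by
    have h1 := Nat.choose_succ_right_eq (j' + 2 * k) (j' + k)
    rw [show j' + 2 * k - (j' + k) = k by omega] at h1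
    have h2 : Nat.choose (j' + 2 * k) (j' + k) * k ≤
        Nat.choose (j' + 2 * k) (j' + k) * (j' + k + 1) :=
      Nat.mul_le_mul_left _ (by omega)
    have := h1.le.trans h2
    exact Nat.le_of_mul_le_mul_right this (by omega)
  have := (Nat.cast_le (α := ℝ)).mpr key
  linarith

lemma Tzero (C : ℕ → ℕ → ℝ) (hgt : ∀ i j, i < j → C i j = 0) {N j : ℕ} (h : N < j) :
    Tpart C N j = 0 := by
  apply Finset.sum_eq_zero
  intro l hl
  rw [hgt l j (by simp only [Finset.mem_range] at hl; omega), zero_div]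

lemma Tsucc (C : ℕ → ℕ → ℝ) (N j : ℕ) :
    Tpart C (N + 1) j = Tpart C N j + C (N + 1) j / 4 ^ (N + 1) :=
  Finset.sum_range_succ _ _

lemma Tnonneg (C : ℕ → ℕ → ℝ) (h11 : C 1 1 = 1) (h0 : ∀ i, C i 0 = 0)
    (hgt : ∀ i j, i < j → C i j = 0)
    (hrec : ∀ i j, 1 ≤ j → j ≤ i → (i, j) ≠ (1, 1) →
      C i j = C (i - 1) (j - 1) + C i (j + 1)) (N j : ℕ) :
    0 ≤ Tpart C N j := by
  apply Finset.sum_nonneg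
  intro l _
  exact div_nonneg (Cnonneg C h11 h0 hgt hrec l j) (by positivity)

lemma Tmono (C : ℕ → ℕ → ℝ) (h11 : C 1 1 = 1) (h0 : ∀ i, C i 0 = 0)
    (hgt : ∀ i j, i < j → C i j = 0)
    (hrec : ∀ i j, 1 ≤ j → j ≤ i → (i, j) ≠ (1, 1) →
      C i j = C (i - 1) (j - 1) + C i (j + 1)) (j : ℕ) :
    Monotone (fun N => Tpart C N j) := by
  apply monotone_nat_of_le_succ
  intro N
  rw [Tsucc]
  have := div_nonneg (Cnonneg C h11 h0 hgt hrec (N + 1) j)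
    (by positivity : (0:ℝ) ≤ 4 ^ (N + 1))
  linarith

lemma Tpart_one (C : ℕ → ℕ → ℝ) (h11 : C 1 1 = 1) (h0 : ∀ i, C i 0 = 0)
    (hgt : ∀ i j, i < j → C i j = 0)
    (hrec : ∀ i j, 1 ≤ j → j ≤ i → (i, j) ≠ (1, 1) →
      C i j = C (i - 1) (j - 1) + C i (j + 1)) :
    ∀ N, Tpart C N 1 = 1 / 2 - (Nat.centralBinom N : ℝ) / (2 * 4 ^ N) := by
  intro N
  induction N with
  | zero =>
    have h01 : C 0 1 = 0 := hgt 0 1 Nat.one_pos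
    simp [Tpart, h01, Nat.centralBinom]
  | succ N ih =>
    rw [Tsucc, ih]
    have hc := Cclosed C h11 h0 hgt hrec N 0
    simp only [Nat.zero_add] at hc
    rw [hc]
    have key : Nat.centralBinom (N + 1) =
        2 * (Nat.choose (2 * N) N + Nat.choose (2 * N) (N + 1)) := by
      have e1 : Nat.centralBinom (N + 1) = Nat.choose (2 * N + 1 + 1) (N + 1) := by
        rw [Nat.centralBinom, show 2 * (N + 1) = 2 * N + 1 + 1 by omega]
      rw [e1, Nat.choose_succ_succ]
      have sym : Nat.choose (2 * N + 1) N = Nat.choose (2 * N + 1) (N + 1) := by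
        rw [← Nat.choose_symm (show N + 1 ≤ 2 * N + 1 by omega)]
        congr 1; omega
      rw [sym, Nat.choose_succ_succ]
      have : Nat.centralBinom N = Nat.choose (2 * N) N := rfl
      simp only [Nat.succ_eq_add_one] at *
      omega
    rw [key, Nat.centralBinom]
    push_cast
    have h4 : (0:ℝ) < 4 ^ N := by positivity
    field_simp
    ring

lemma Tpart_two (C : ℕ → ℕ → ℝ) (h11 : C 1 1 = 1) (h0 : ∀ i, C i 0 = 0)
    (hgt : ∀ i j, i < j → C i j = 0)
    (hrec : ∀ i j, 1 ≤ j → j ≤ i → (i, j) ≠ (1, 1) →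
      C i j = C (i - 1) (j - 1) + C i (j + 1)) :
    ∀ N, 1 ≤ N → Tpart C N 2 = Tpart C N 1 - 1 / 4 := by
  intro N
  induction N with
  | zero => omega
  | succ N ih =>
    intro _
    rcases Nat.eq_zero_or_pos N with rfl | hN
    · show Tpart C 1 2 = Tpart C 1 1 - 1 / 4
      rw [Tsucc, Tsucc]
      simp [Tpart, hgt 0 1 (by omega), hgt 0 2 (by omega), hgt 1 2 (by omega), h11]
    · rw [Tsucc, Tsucc, ih hN]
      have : C (N + 1) 1 = C (N + 1) 2 := by
        rw [hrec (N + 1) 1 le_rfl (by omega) (by simp; omega)]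
        rw [show N + 1 - 1 = N by omega, h0]
        ring
      rw [this]
      ring

lemma Tpart_rec (C : ℕ → ℕ → ℝ) (hgt : ∀ i j, i < j → C i j = 0)
    (hrec : ∀ i j, 1 ≤ j → j ≤ i → (i, j) ≠ (1, 1) →
      C i j = C (i - 1) (j - 1) + C i (j + 1)) (N j : ℕ) :
    Tpart C (N + 1) (j + 3) = Tpart C (N + 1) (j + 2) - Tpart C N (j + 1) / 4 := by
  have key : Tpart C (N + 1) (j + 2) - Tpart C (N + 1) (j + 3) = Tpart C N (j + 1) / 4 := by
    unfold Tpart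
    rw [← Finset.sum_sub_distrib, Finset.sum_range_succ', Finset.sum_div]
    rw [hgt 0 (j + 2) (by omega), hgt 0 (j + 3) (by omega)]
    simp only [pow_zero, zero_div, sub_zero, add_zero]
    apply Finset.sum_congr rfl
    intro m _
    rcases lt_or_ge (m + 1) (j + 2) with h | h
    · rw [hgt _ _ h, hgt (m + 1) (j + 3) (by omega), hgt m (j + 1) (by omega)]
      simp
    · rw [div_sub_div_same, hrec (m + 1) (j + 2) (by omega) h (by simp)]
      simp only [Nat.add_sub_cancel, show j + 2 - 1 = j + 1 by omega]
      rw [pow_succ]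
      ring
  linarith
lemma cb_sq_le (N : ℕ) : ((Nat.centralBinom N : ℝ) / 4 ^ N) ^ 2 ≤ 1 / (N + 1) := by
  induction N with
  | zero => simp [Nat.centralBinom]
  | succ N ih =>
    have hR : ((N : ℝ) + 1) * Nat.centralBinom (N + 1) = 2 * (2 * N + 1) * Nat.centralBinom N := by
      exact_mod_cast Nat.succ_mul_centralBinom_succ N
    have e : ((Nat.centralBinom (N + 1) : ℝ) / 4 ^ (N + 1)) =
        (Nat.centralBinom N : ℝ) / 4 ^ N * ((2 * N + 1) / (2 * N + 2)) := by
      rw [div_mul_div_comm, div_eq_div_iff (by positivity) (by positivity), pow_succ]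
      linear_combination (2 * (4:ℝ) ^ N) * hR
    rw [e, mul_pow]
    have hq : (((2 * (N:ℝ) + 1) / (2 * N + 2)) ^ 2) ≤ ((N:ℝ) + 1) / ((N:ℝ) + 2) := by
      rw [div_pow, div_le_div_iff₀ (by positivity) (by positivity)]
      nlinarith [sq_nonneg (N:ℝ)]
    have step : ((Nat.centralBinom N : ℝ) / 4 ^ N) ^ 2 * ((2 * (N:ℝ) + 1) / (2 * N + 2)) ^ 2 ≤
        (1 / ((N:ℝ) + 1)) * (((N:ℝ) + 1) / ((N:ℝ) + 2)) :=
      mul_le_mul ih hq (by positivity) (by positivity)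
    refine step.trans ?_
    have e2 : (1 / ((N:ℝ) + 1)) * (((N:ℝ) + 1) / ((N:ℝ) + 2)) = 1 / ((N:ℝ) + 2) := by
      field_simp
    rw [e2]
    apply le_of_eq
    push_cast
    ring

lemma cb_tendsto : Filter.Tendsto (fun N : ℕ => (Nat.centralBinom N : ℝ) / 4 ^ N)
    Filter.atTop (𝓝 0) := by
  have hub : ∀ N : ℕ, (Nat.centralBinom N : ℝ) / 4 ^ N ≤ Real.sqrt (1 / (N + 1)) := by
    intro N
    have hnn : (0:ℝ) ≤ (Nat.centralBinom N : ℝ) / 4 ^ N := by positivity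
    calc (Nat.centralBinom N : ℝ) / 4 ^ N
        = Real.sqrt (((Nat.centralBinom N : ℝ) / 4 ^ N) ^ 2) := by
          rw [Real.sqrt_sq hnn]
      _ ≤ Real.sqrt (1 / (N + 1)) := Real.sqrt_le_sqrt (cb_sq_le N)
  have hs : Filter.Tendsto (fun N : ℕ => Real.sqrt (1 / ((N:ℝ) + 1))) Filter.atTop (𝓝 0) := by
    have h0 : Filter.Tendsto (fun N : ℕ => 1 / ((N : ℝ) + 1)) Filter.atTop (𝓝 0) :=
      tendsto_one_div_add_atTop_nhds_zero_nat
    have h1 := (Real.continuous_sqrt.tendsto 0).comp h0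
    rw [Real.sqrt_zero] at h1
    exact h1
  exact squeeze_zero (fun N => by positivity) hub hs

lemma Tlim (C : ℕ → ℕ → ℝ) (h11 : C 1 1 = 1) (h0 : ∀ i, C i 0 = 0)
    (hgt : ∀ i j, i < j → C i j = 0)
    (hrec : ∀ i j, 1 ≤ j → j ≤ i → (i, j) ≠ (1, 1) →
      C i j = C (i - 1) (j - 1) + C i (j + 1)) :
    ∀ j, Tendsto (fun N => Tpart C N (j + 1)) atTop (𝓝 (1 / 2 ^ (j + 1))) := by
  have Q0 : Tendsto (fun N => Tpart C N 1) atTop (𝓝 (1 / 2 ^ 1)) := by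
    have : (fun N => Tpart C N 1) =
        fun N => 1 / 2 - (Nat.centralBinom N : ℝ) / 4 ^ N * (1 / 2) := by
      funext N
      rw [Tpart_one C h11 h0 hgt hrec N]
      ring
    rw [this]
    have h := (cb_tendsto.mul_const (1 / 2)).const_sub (1 / 2 : ℝ)
    norm_num at h ⊢
    exact h
  have Q1 : Tendsto (fun N => Tpart C N 2) atTop (𝓝 (1 / 2 ^ 2)) := by
    have heq : (fun N => Tpart C N 1 - 1 / 4) =ᶠ[atTop] (fun N => Tpart C N 2) := by
      filter_upwards [eventually_ge_atTop 1] with N hN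
      exact (Tpart_two C h11 h0 hgt hrec N hN).symm
    have h := (Q0.sub_const (1 / 4)).congr' heq
    norm_num at h ⊢
    exact h
  have main : ∀ j, Tendsto (fun N => Tpart C N (j + 1)) atTop (𝓝 (1 / 2 ^ (j + 1))) ∧
      Tendsto (fun N => Tpart C N (j + 2)) atTop (𝓝 (1 / 2 ^ (j + 2))) := by
    intro j
    induction j with
    | zero => exact ⟨Q0, Q1⟩
    | succ j ih =>
      refine ⟨ih.2, ?_⟩
      have h2 := ih.2.comp (tendsto_add_atTop_nat 1)
      have h1 := ih.1
      have key : (fun N => Tpart C (N + 1) (j + 2) - Tpart C N (j + 1) / 4) =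
          fun N => Tpart C (N + 1) (j + 3) := by
        funext N
        rw [Tpart_rec C hgt hrec N j]
      have hlim : Tendsto (fun N => Tpart C (N + 1) (j + 3)) atTop
          (𝓝 (1 / 2 ^ (j + 2) - (1 / 2 ^ (j + 1)) / 4)) := by
        rw [← key]
        exact h2.sub (h1.div_const 4)
      have : Tendsto (fun N => Tpart C N (j + 3)) atTop
          (𝓝 (1 / 2 ^ (j + 2) - (1 / 2 ^ (j + 1)) / 4)) :=
        (tendsto_add_atTop_iff_nat 1).mp hlim
      have e : (1:ℝ) / 2 ^ (j + 2) - (1 / 2 ^ (j + 1)) / 4 = 1 / 2 ^ (j + 3) := by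
        rw [pow_succ, pow_succ, pow_succ]
        ring
      rw [e] at this
      exact this
  exact fun j => (main j).1

lemma Tle (C : ℕ → ℕ → ℝ) (h11 : C 1 1 = 1) (h0 : ∀ i, C i 0 = 0)
    (hgt : ∀ i j, i < j → C i j = 0)
    (hrec : ∀ i j, 1 ≤ j → j ≤ i → (i, j) ≠ (1, 1) →
      C i j = C (i - 1) (j - 1) + C i (j + 1)) (N j : ℕ) :
    Tpart C N (j + 1) ≤ 1 / 2 ^ (j + 1) :=
  Monotone.ge_of_tendsto (Tmono C h11 h0 hgt hrec (j + 1))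
    (Tlim C h11 h0 hgt hrec j) N
lemma Req (C : ℕ → ℕ → ℝ) (hgt : ∀ i j, i < j → C i j = 0) (a : ℕ → ℕ → ℝ) :
    ∀ M, ∑ i ∈ Finset.range M, ∑ j' ∈ Finset.range M,
        Tpart C (M - i) (j' + 1) * a i (j' + 1)
      = ∑ m ∈ Finset.range M, ∑ i ∈ Finset.range (m + 1),
          ∑ j ∈ Finset.Icc 1 (m + 1 - i), C (m + 1 - i) j / 4 ^ (m + 1 - i) * a i j := by
  intro M
  induction M with
  | zero => simp
  | succ M ih =>
    have hL : ∑ i ∈ Finset.range (M + 1), ∑ j' ∈ Finset.range (M + 1),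
        Tpart C (M + 1 - i) (j' + 1) * a i (j' + 1)
        = (∑ i ∈ Finset.range (M + 1), ∑ j' ∈ Finset.range (M + 1),
            Tpart C (M - i) (j' + 1) * a i (j' + 1))
          + ∑ i ∈ Finset.range (M + 1), ∑ j' ∈ Finset.range (M + 1),
              C (M + 1 - i) (j' + 1) / 4 ^ (M + 1 - i) * a i (j' + 1) := by
      rw [← Finset.sum_add_distrib]
      apply Finset.sum_congr rfl
      intro i hi
      rw [← Finset.sum_add_distrib]
      apply Finset.sum_congr rfl
      intro j' _
      have hi' : i ≤ M := by
        simp only [Finset.mem_range] at hi; omega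
      have e : M + 1 - i = (M - i) + 1 := by omega
      rw [e, Tsucc]
      ring
    have hA : ∑ i ∈ Finset.range (M + 1), ∑ j' ∈ Finset.range (M + 1),
        Tpart C (M - i) (j' + 1) * a i (j' + 1)
        = ∑ i ∈ Finset.range M, ∑ j' ∈ Finset.range M,
            Tpart C (M - i) (j' + 1) * a i (j' + 1) := by
      rw [Finset.sum_range_succ]
      have hz : ∑ j' ∈ Finset.range (M + 1), Tpart C (M - M) (j' + 1) * a M (j' + 1) = 0 := by
        apply Finset.sum_eq_zero
        intro j' _
        rw [Nat.sub_self, Tzero C hgt (by omega), zero_mul]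
      rw [hz, add_zero]
      apply Finset.sum_congr rfl
      intro i hi
      rw [Finset.sum_range_succ, Tzero C hgt (show M - i < M + 1 by omega), zero_mul, add_zero]
    have hD : ∀ i ∈ Finset.range (M + 1), ∑ j' ∈ Finset.range (M + 1),
        C (M + 1 - i) (j' + 1) / 4 ^ (M + 1 - i) * a i (j' + 1)
        = ∑ j ∈ Finset.Icc 1 (M + 1 - i), C (M + 1 - i) j / 4 ^ (M + 1 - i) * a i j := by
      intro i _
      have h1 : ∑ j ∈ Finset.Icc 1 (M + 1 - i), C (M + 1 - i) j / 4 ^ (M + 1 - i) * a i j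
          = ∑ j ∈ Finset.Icc 1 (M + 1), C (M + 1 - i) j / 4 ^ (M + 1 - i) * a i j := by
        apply Finset.sum_subset
        · exact Finset.Icc_subset_Icc_right (by omega)
        · intro j hj hnj
          simp only [Finset.mem_Icc] at hj hnj
          rw [hgt (M + 1 - i) j (by omega), zero_div, zero_mul]
      rw [h1, ← Finset.Ico_add_one_right_eq_Icc, Finset.sum_Ico_eq_sum_range]
      rw [show M + 1 + 1 - 1 = M + 1 by omega]
      apply Finset.sum_congr rfl
      intro j' _
      rw [Nat.add_comm 1 j']
    calc ∑ i ∈ Finset.range (M + 1), ∑ j' ∈ Finset.range (M + 1),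
          Tpart C (M + 1 - i) (j' + 1) * a i (j' + 1)
        = (∑ i ∈ Finset.range (M + 1), ∑ j' ∈ Finset.range (M + 1),
            Tpart C (M - i) (j' + 1) * a i (j' + 1))
          + ∑ i ∈ Finset.range (M + 1), ∑ j' ∈ Finset.range (M + 1),
              C (M + 1 - i) (j' + 1) / 4 ^ (M + 1 - i) * a i (j' + 1) := hL
      _ = (∑ i ∈ Finset.range M, ∑ j' ∈ Finset.range M,
            Tpart C (M - i) (j' + 1) * a i (j' + 1))
          + ∑ i ∈ Finset.range (M + 1),
              ∑ j ∈ Finset.Icc 1 (M + 1 - i), C (M + 1 - i) j / 4 ^ (M + 1 - i) * a i j := by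
          rw [hA, Finset.sum_congr rfl hD]
      _ = ∑ m ∈ Finset.range (M + 1), ∑ i ∈ Finset.range (m + 1),
            ∑ j ∈ Finset.Icc 1 (m + 1 - i), C (m + 1 - i) j / 4 ^ (m + 1 - i) * a i j := by
          conv_rhs => rw [Finset.sum_range_succ]
          rw [← ih]

/-- Reindexing the triple series: Σ_{n=1}^∞ Σ_{i=0}^{n-1} Σ_{j=1}^{n-i}
C(n-i,j)/4^{n-i} · a_{i,j} = Σ_{i=0}^∞ Σ_{j=1}^∞ a_{i,j}/2^j for a summable
nonnegative array a, using Σ_{l=j}^∞ C(l,j)/4^l = 1/2^j. -/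
theorem catalan_triangle_reindexed_sum (C : ℕ → ℕ → ℝ)
    (h11 : C 1 1 = 1)
    (h0 : ∀ i, C i 0 = 0)
    (hgt : ∀ i j, i < j → C i j = 0)
    (hrec : ∀ i j, 1 ≤ j → j ≤ i → (i, j) ≠ (1, 1) →
      C i j = C (i - 1) (j - 1) + C i (j + 1))
    (a : ℕ → ℕ → ℝ) (ha : ∀ i j, 0 ≤ a i j)
    (hsum : Summable (fun p : ℕ × ℕ => a p.1 (p.2 + 1) / 2 ^ (p.2 + 1))) :
    HasSum (fun m : ℕ => ∑ i ∈ Finset.range (m + 1), ∑ j ∈ Finset.Icc 1 (m + 1 - i),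
        C (m + 1 - i) j / 4 ^ (m + 1 - i) * a i j)
      (∑' p : ℕ × ℕ, a p.1 (p.2 + 1) / 2 ^ (p.2 + 1)) := by
  have hf_nonneg : ∀ m : ℕ, 0 ≤ ∑ i ∈ Finset.range (m + 1),
      ∑ j ∈ Finset.Icc 1 (m + 1 - i), C (m + 1 - i) j / 4 ^ (m + 1 - i) * a i j := by
    intro m
    apply Finset.sum_nonneg
    intro i _
    apply Finset.sum_nonneg
    intro j _
    exact mul_nonneg (div_nonneg (Cnonneg C h11 h0 hgt hrec _ _) (by positivity)) (ha i j)
  rw [hasSum_iff_tendsto_nat_of_nonneg hf_nonneg]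
  have hG : ∀ M : ℕ, (∑' p : ℕ × ℕ, Tpart C (M - p.1) (p.2 + 1) * a p.1 (p.2 + 1))
      = ∑ m ∈ Finset.range M, ∑ i ∈ Finset.range (m + 1),
          ∑ j ∈ Finset.Icc 1 (m + 1 - i), C (m + 1 - i) j / 4 ^ (m + 1 - i) * a i j := by
    intro M
    rw [tsum_eq_sum (s := Finset.range M ×ˢ Finset.range M) ?_]
    · rw [Finset.sum_product]
      exact Req C hgt a M
    · intro p hp
      simp only [Finset.mem_product, Finset.mem_range, not_and_or, not_lt] at hp
      rcases hp with h | h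
      · rw [Tzero C hgt (show M - p.1 < p.2 + 1 by omega), zero_mul]
      · rw [Tzero C hgt (show M - p.1 < p.2 + 1 by omega), zero_mul]
  have main : Filter.Tendsto
      (fun M : ℕ => ∑' p : ℕ × ℕ, Tpart C (M - p.1) (p.2 + 1) * a p.1 (p.2 + 1))
      Filter.atTop (𝓝 (∑' p : ℕ × ℕ, a p.1 (p.2 + 1) / 2 ^ (p.2 + 1))) := by
    apply tendsto_tsum_of_dominated_convergence hsum
    · intro p
      have h1 : Filter.Tendsto (fun M : ℕ => Tpart C (M - p.1) (p.2 + 1))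
          Filter.atTop (𝓝 (1 / 2 ^ (p.2 + 1))) :=
        (Tlim C h11 h0 hgt hrec p.2).comp (tendsto_sub_atTop_nat p.1)
      have e : a p.1 (p.2 + 1) / 2 ^ (p.2 + 1) = 1 / 2 ^ (p.2 + 1) * a p.1 (p.2 + 1) := by
        ring
      rw [e]
      exact h1.mul_const _
    · filter_upwards with M
      intro p
      have hnn : 0 ≤ Tpart C (M - p.1) (p.2 + 1) * a p.1 (p.2 + 1) :=
        mul_nonneg (Tnonneg C h11 h0 hgt hrec _ _) (ha _ _)
      rw [Real.norm_eq_abs, abs_of_nonneg hnn]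
      calc Tpart C (M - p.1) (p.2 + 1) * a p.1 (p.2 + 1)
          ≤ 1 / 2 ^ (p.2 + 1) * a p.1 (p.2 + 1) :=
            mul_le_mul_of_nonneg_right (Tle C h11 h0 hgt hrec _ _) (ha _ _)
        _ = a p.1 (p.2 + 1) / 2 ^ (p.2 + 1) := by ring
  exact main.congr hG
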